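/- Let ω((a,b),(a',b')) = 2(b a' − a b') be the symplectic form on ℤ². For every η > 0 there is a constant C such that for every point (A, c) ∈ ℤ² × ℤ and every j ≥ 1, the number of triples (m₁, m₂, m₃) ∈ (ℤ²)³ with 2ʲ ≤ |mₗ| < 2^{j+1} for each l, satisfying m₁ − m₂ + m₃ = A and ω(y, m₁) − ω(y − m₁, m₂) + ω(y − m₁ + m₂, m₃) = c (for a fixed y ∈ ℤ²), is at most C·2^{(2+η)j}. -/

import Mathlib

/-- The symplectic form on `ℤ²`: `ω((a,b),(a',b')) = 2(b a' − a b')`. -/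
def omega2 (s t : ℤ × ℤ) : ℤ := 2 * (s.2 * t.1 - s.1 * t.2)

/-- The Euclidean norm of a point of `ℤ²`. -/
noncomputable def enorm2 (m : ℤ × ℤ) : ℝ := Real.sqrt ((m.1 : ℝ) ^ 2 + (m.2 : ℝ) ^ 2)

namespace TC

noncomputable def boxZ (M : ℤ) : Finset (ℤ × ℤ) := Finset.Icc (-M) M ×ˢ Finset.Icc (-M) M

lemma mem_boxZ {M : ℤ} {s : ℤ × ℤ} : s ∈ boxZ M ↔ |s.1| ≤ M ∧ |s.2| ≤ M := by
  simp [boxZ, Finset.mem_product, Finset.mem_Icc, abs_le]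

def gInt (n : ℤ × ℤ) : ℤ := Int.gcd n.1 n.2

def primZ (n : ℤ × ℤ) : ℤ × ℤ := (n.1 / gInt n, n.2 / gInt n)

def supZ (n : ℤ × ℤ) : ℤ := max |n.1| |n.2|

lemma gInt_pos {n : ℤ × ℤ} (hn : n ≠ 0) : 0 < gInt n := by
  have : n.1 ≠ 0 ∨ n.2 ≠ 0 := by
    by_contra h
    push_neg at h
    exact hn (Prod.ext h.1 h.2)
  have h2 := Int.gcd_pos_iff.2 this
  unfold gInt
  exact_mod_cast h2

lemma gInt_dvd1 (n : ℤ × ℤ) : gInt n ∣ n.1 := Int.gcd_dvd_left n.1 n.2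
lemma gInt_dvd2 (n : ℤ × ℤ) : gInt n ∣ n.2 := Int.gcd_dvd_right n.1 n.2

lemma mul_primZ1 (n : ℤ × ℤ) : gInt n * (primZ n).1 = n.1 :=
  Int.mul_ediv_cancel' (gInt_dvd1 n)

lemma mul_primZ2 (n : ℤ × ℤ) : gInt n * (primZ n).2 = n.2 :=
  Int.mul_ediv_cancel' (gInt_dvd2 n)

lemma coprime_primZ {n : ℤ × ℤ} (hn : n ≠ 0) :
    IsCoprime (primZ n).1 (primZ n).2 := by
  rw [Int.isCoprime_iff_gcd_eq_one]
  have : n.1 ≠ 0 ∨ n.2 ≠ 0 := by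
    by_contra h
    push_neg at h
    exact hn (Prod.ext h.1 h.2)
  exact Int.gcd_div_gcd_div_gcd (Int.gcd_pos_iff.2 this)

lemma supZ_mul (n : ℤ × ℤ) (hn : n ≠ 0) : supZ n = gInt n * supZ (primZ n) := by
  have hg : (0:ℤ) ≤ gInt n := (gInt_pos hn).le
  have h1 : |n.1| = gInt n * |(primZ n).1| := by
    rw [← mul_primZ1 n, abs_mul, abs_of_nonneg hg]
  have h2 : |n.2| = gInt n * |(primZ n).2| := by
    rw [← mul_primZ2 n, abs_mul, abs_of_nonneg hg]
  rw [supZ, supZ, h1, h2, mul_max_of_nonneg _ _ hg]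

lemma supZ_pos {n : ℤ × ℤ} (hn : n ≠ 0) : 1 ≤ supZ n := by
  rcases (by by_contra h; push_neg at h; exact hn (Prod.ext h.1 h.2) :
      n.1 ≠ 0 ∨ n.2 ≠ 0) with h | h
  · exact le_max_of_le_left (Int.one_le_abs h)
  · exact le_max_of_le_right (Int.one_le_abs h)

lemma primZ_ne_zero {n : ℤ × ℤ} (hn : n ≠ 0) : primZ n ≠ 0 := by
  intro h
  have h1 := mul_primZ1 n
  have h2 := mul_primZ2 n
  rw [h] at h1 h2
  simp at h1 h2
  exact hn (Prod.ext h1.symm h2.symm)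

lemma supZ_primZ_pos {n : ℤ × ℤ} (hn : n ≠ 0) : 1 ≤ supZ (primZ n) :=
  supZ_pos (primZ_ne_zero hn)

lemma supZ_primZ_le {n : ℤ × ℤ} (hn : n ≠ 0) : supZ (primZ n) ≤ supZ n := by
  rw [supZ_mul n hn]
  nlinarith [gInt_pos hn, supZ_primZ_pos hn]



lemma fiber_core (N : ℤ) (hN : 0 ≤ N) (a b e : ℤ) (hab : |b| ≤ |a|) (ha : a ≠ 0) :
    (((boxZ N).filter (fun s => b * s.1 - a * s.2 = e)).card : ℝ)
      ≤ 4 * N / (supZ (primZ (a, b))) + 1 := by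
  have hn : ((a, b) : ℤ × ℤ) ≠ 0 := by
    simp [Prod.ext_iff]
    intro h; exact absurd h ha
  set g : ℤ := gInt (a, b) with hgdef
  have hg : 0 < g := gInt_pos hn
  set a' : ℤ := (primZ (a, b)).1 with ha'def
  set b' : ℤ := (primZ (a, b)).2 with hb'def
  have hga : g * a' = a := mul_primZ1 (a, b)
  have hgb : g * b' = b := mul_primZ2 (a, b)
  have ha' : a' ≠ 0 := by
    intro h; rw [h, mul_zero] at hga; exact ha hga.symm
  have ha'pos : 0 < |a'| := abs_pos.2 ha'
  have hsup : supZ (primZ (a, b)) = |a'| := by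
    have hb'a' : |b'| ≤ |a'| := by
      have h1 : g * |b'| ≤ g * |a'| := by
        rw [← abs_of_nonneg hg.le, ← abs_mul, ← abs_mul, hga, hgb]; exact hab
      exact le_of_mul_le_mul_left h1 hg
    have h0 : supZ (primZ (a, b)) = max |a'| |b'| := rfl
    rw [h0, max_eq_left hb'a']
  rw [hsup]
  have hsupR : (0:ℝ) < |a'| := by exact_mod_cast ha'pos
  rcases Finset.eq_empty_or_nonempty ((boxZ N).filter (fun s => b * s.1 - a * s.2 = e))
    with hF | ⟨s₀, hs₀⟩
  · rw [hF]
    simp only [Finset.card_empty, Nat.cast_zero]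
    have : (0:ℝ) ≤ 4 * N / |a'| := by
      apply div_nonneg _ hsupR.le
      have : (0:ℝ) ≤ (N:ℝ) := by exact_mod_cast hN
      linarith
    linarith
  · set K : ℤ := 2 * N / |a'| with hKdef
    have hK0 : 0 ≤ K := Int.ediv_nonneg (by linarith) ha'pos.le
    have hcard : ((boxZ N).filter (fun s => b * s.1 - a * s.2 = e)).card
        ≤ (Finset.Icc (-K) K).card := by
      apply Finset.card_le_card_of_injOn (fun s => (s.1 - s₀.1) / a')
      · intro s hs
        simp only [Finset.mem_coe, Finset.mem_filter] at hs hs₀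
        have hdvd : a' ∣ (s.1 - s₀.1) := by
          have hb1 : b * (s.1 - s₀.1) = a * (s.2 - s₀.2) := by
            linear_combination hs.2 - hs₀.2
          have hb2 : g * (b' * (s.1 - s₀.1)) = g * (a' * (s.2 - s₀.2)) := by
            linear_combination hb1 + (s.1 - s₀.1) * hgb - (s.2 - s₀.2) * hga
          have hb3 : b' * (s.1 - s₀.1) = a' * (s.2 - s₀.2) :=
            mul_left_cancel₀ hg.ne' hb2
          exact (coprime_primZ hn).dvd_of_dvd_mul_left ⟨_, hb3⟩
        have heq : (s.1 - s₀.1) / a' * a' = s.1 - s₀.1 := Int.ediv_mul_cancel hdvd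
        have habs : |s.1 - s₀.1| ≤ 2 * N := by
          have h1 := (mem_boxZ.1 hs.1).1
          have h2 := (mem_boxZ.1 hs₀.1).1
          calc |s.1 - s₀.1| ≤ |s.1| + |s₀.1| := abs_sub _ _
            _ ≤ 2 * N := by linarith
        have hq : |(s.1 - s₀.1) / a'| ≤ K := by
          rw [hKdef, Int.le_ediv_iff_mul_le ha'pos, ← abs_mul, heq]
          exact habs
        rw [Finset.mem_coe, Finset.mem_Icc]
        exact abs_le.1 hq
      · intro s hs t ht hst
        simp only [Finset.mem_coe, Finset.mem_filter] at hs ht hs₀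
        have hdvds : a' ∣ (s.1 - s₀.1) := by
          have hb1 : b * (s.1 - s₀.1) = a * (s.2 - s₀.2) := by
            linear_combination hs.2 - hs₀.2
          have hb2 : g * (b' * (s.1 - s₀.1)) = g * (a' * (s.2 - s₀.2)) := by
            linear_combination hb1 + (s.1 - s₀.1) * hgb - (s.2 - s₀.2) * hga
          exact (coprime_primZ hn).dvd_of_dvd_mul_left ⟨_, mul_left_cancel₀ hg.ne' hb2⟩
        have hdvdt : a' ∣ (t.1 - s₀.1) := by
          have hb1 : b * (t.1 - s₀.1) = a * (t.2 - s₀.2) := by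
            linear_combination ht.2 - hs₀.2
          have hb2 : g * (b' * (t.1 - s₀.1)) = g * (a' * (t.2 - s₀.2)) := by
            linear_combination hb1 + (t.1 - s₀.1) * hgb - (t.2 - s₀.2) * hga
          exact (coprime_primZ hn).dvd_of_dvd_mul_left ⟨_, mul_left_cancel₀ hg.ne' hb2⟩
        have h1 : s.1 = t.1 := by
          have := congrArg (· * a') hst
          simp only at this
          rw [Int.ediv_mul_cancel hdvds, Int.ediv_mul_cancel hdvdt] at this
          linarith
        have h2 : s.2 = t.2 := by
          have hs2 := hs.2
          have ht2 := ht.2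
          rw [h1] at hs2
          have : a * s.2 = a * t.2 := by linarith
          exact mul_left_cancel₀ ha this
        exact Prod.ext h1 h2
    have hcardIcc : (Finset.Icc (-K) K).card = (2 * K + 1).toNat := by
      rw [Int.card_Icc]
      congr 1
      ring
    have hcast : (((Finset.Icc (-K) K).card : ℕ) : ℝ) = 2 * (K:ℝ) + 1 := by
      have hnn : (0:ℤ) ≤ 2 * K + 1 := by linarith
      have h3 : (((2 * K + 1).toNat : ℕ) : ℝ) = ((2 * K + 1 : ℤ) : ℝ) := by
        rw [← Int.cast_natCast, Int.toNat_of_nonneg hnn]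
      rw [hcardIcc, h3]
      push_cast
      ring
    have hKle : (K:ℝ) ≤ 2 * N / |a'| := by
      rw [le_div_iff₀ hsupR]
      have h2 : (K * |a'| : ℤ) ≤ 2 * N := Int.ediv_mul_le (2 * N) ha'pos.ne'
      exact_mod_cast h2
    calc (((boxZ N).filter (fun s => b * s.1 - a * s.2 = e)).card : ℝ)
        ≤ ((Finset.Icc (-K) K).card : ℝ) := by exact_mod_cast hcard
      _ = 2 * (K:ℝ) + 1 := hcast
      _ ≤ 4 * N / |a'| + 1 := by
          have : 2 * (K:ℝ) ≤ 2 * (2 * N / |a'|) := by linarith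
          rw [mul_div_assoc] at this ⊢
          linarith


lemma gInt_negswap (n : ℤ × ℤ) : gInt (-n.2, -n.1) = gInt n := by
  unfold gInt Int.gcd
  simp only [Int.natAbs_neg]
  exact_mod_cast congrArg Nat.cast (Nat.gcd_comm _ _)

lemma neg_ediv_of_dvd' {g x : ℤ} (h : g ∣ x) : (-x) / g = -(x / g) := by
  rcases eq_or_ne g 0 with hg | hg
  · subst hg; simp
  · have h1 : (-x) / g * g = -x := Int.ediv_mul_cancel (dvd_neg.2 h)
    have h2 : x / g * g = x := Int.ediv_mul_cancel h
    have : (-x) / g * g = -(x / g) * g := by rw [h1]; linarith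
    exact mul_right_cancel₀ hg this

lemma supZ_primZ_negswap (n : ℤ × ℤ) : supZ (primZ (-n.2, -n.1)) = supZ (primZ n) := by
  have hg : gInt (-n.2, -n.1) = gInt n := gInt_negswap n
  have h1 : (primZ (-n.2, -n.1)).1 = -(n.2 / gInt n) := by
    show (-n.2) / gInt (-n.2, -n.1) = _
    rw [hg]; exact neg_ediv_of_dvd' (gInt_dvd2 n)
  have h2 : (primZ (-n.2, -n.1)).2 = -(n.1 / gInt n) := by
    show (-n.1) / gInt (-n.2, -n.1) = _
    rw [hg]; exact neg_ediv_of_dvd' (gInt_dvd1 n)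
  unfold supZ
  rw [h1, h2, abs_neg, abs_neg]
  exact max_comm _ _

lemma fiber_bound (N : ℤ) (hN : 0 ≤ N) (n : ℤ × ℤ) (hn : n ≠ 0) (e : ℤ) :
    (((boxZ N).filter (fun s => n.2 * s.1 - n.1 * s.2 = e)).card : ℝ)
      ≤ 4 * N / (supZ (primZ n)) + 1 := by
  rcases le_or_gt |n.2| |n.1| with hc | hc
  · have ha : n.1 ≠ 0 := by
      intro h
      rw [h, abs_zero] at hc
      have h2 : n.2 = 0 := abs_nonpos_iff.1 hc
      exact hn (Prod.ext h h2)
    have := fiber_core N hN n.1 n.2 e hc ha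
    simpa using this
  · have hb : n.2 ≠ 0 := by
      intro h
      rw [h, abs_zero] at hc
      exact absurd hc (not_lt.2 (abs_nonneg _))
    have hcore := fiber_core N hN (-n.2) (-n.1) e
      (by rw [abs_neg, abs_neg]; exact hc.le) (neg_ne_zero.2 hb)
    rw [supZ_primZ_negswap n] at hcore
    refine le_trans ?_ hcore
    have hcardle : ((boxZ N).filter (fun s => n.2 * s.1 - n.1 * s.2 = e)).card
        ≤ ((boxZ N).filter (fun s => (-n.1) * s.1 - (-n.2) * s.2 = e)).card := by
      apply Finset.card_le_card_of_injOn Prod.swap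
      · intro s hs
        simp only [Finset.mem_coe, Finset.mem_filter, mem_boxZ] at hs ⊢
        refine ⟨⟨hs.1.2, hs.1.1⟩, ?_⟩
        have := hs.2
        simp only [Prod.fst_swap, Prod.snd_swap]
        linarith
      · intro s _ t _ hst
        exact Prod.swap_injective hst
    exact_mod_cast hcardle


noncomputable def finv (x : ℤ) : ℝ := ((|x| + 1 : ℤ) : ℝ)⁻¹

lemma finv_nonneg (x : ℤ) : 0 ≤ finv x := by
  unfold finv
  have : (0:ℤ) < |x| + 1 := by positivity
  have : (0:ℝ) < ((|x| + 1 : ℤ) : ℝ) := by exact_mod_cast this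
  positivity

lemma sum_abs_inv (M : ℤ) (hM : 0 ≤ M) :
    ∑ x ∈ Finset.Icc (-M) M, finv x ≤ 2 * (1 + Real.log ((M:ℝ) + 1)) := by
  classical
  have hmaps : ∀ x ∈ Finset.Icc (-M) M, x.natAbs ∈ Finset.range (M.toNat + 1) := by
    intro x hx
    rw [Finset.mem_Icc] at hx
    rw [Finset.mem_range]
    omega
  rw [← Finset.sum_fiberwise_of_maps_to hmaps finv]
  have hinner : ∀ k ∈ Finset.range (M.toNat + 1),
      ∑ x ∈ (Finset.Icc (-M) M).filter (fun x => x.natAbs = k), finv x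
        ≤ 2 * ((1:ℝ)/((k:ℝ) + 1)) := by
    intro k hk
    have hsub : (Finset.Icc (-M) M).filter (fun x => x.natAbs = k)
        ⊆ {(k:ℤ), -(k:ℤ)} := by
      intro x hx
      rw [Finset.mem_filter] at hx
      have := hx.2
      simp only [Finset.mem_insert, Finset.mem_singleton]
      omega
    have heq : ∀ x ∈ (Finset.Icc (-M) M).filter (fun x => x.natAbs = k),
        finv x = (1:ℝ)/((k:ℝ) + 1) := by
      intro x hx
      rw [Finset.mem_filter] at hx
      have hxk : |x| = (k:ℤ) := by
        rw [Int.abs_eq_natAbs, hx.2]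
      unfold finv
      rw [hxk, one_div]
      norm_cast
    rw [Finset.sum_congr rfl heq, Finset.sum_const]
    have hcard : ((Finset.Icc (-M) M).filter (fun x => x.natAbs = k)).card ≤ 2 := by
      calc _ ≤ ({(k:ℤ), -(k:ℤ)} : Finset ℤ).card := Finset.card_le_card hsub
        _ ≤ 2 := Finset.card_insert_le _ _ |>.trans (by simp)
    have hpos : (0:ℝ) ≤ 1/((k:ℝ) + 1) := by positivity
    rw [nsmul_eq_mul]
    apply mul_le_mul_of_nonneg_right _ hpos
    exact_mod_cast hcard
  calc ∑ k ∈ Finset.range (M.toNat + 1),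
        ∑ x ∈ (Finset.Icc (-M) M).filter (fun x => x.natAbs = k), finv x
      ≤ ∑ k ∈ Finset.range (M.toNat + 1), 2 * ((1:ℝ)/((k:ℝ) + 1)) :=
        Finset.sum_le_sum hinner
    _ = 2 * ∑ k ∈ Finset.range (M.toNat + 1), (1:ℝ)/((k:ℝ) + 1) := by
        rw [Finset.mul_sum]
    _ ≤ 2 * (1 + Real.log ((M:ℝ) + 1)) := by
        have h1 : ∑ k ∈ Finset.range (M.toNat + 1), (1:ℝ)/((k:ℝ) + 1)
            = (harmonic (M.toNat + 1) : ℝ) := by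
          rw [harmonic]
          push_cast
          simp [one_div]
        rw [h1]
        have h2 := harmonic_le_one_add_log (M.toNat + 1)
        have h3 : ((M.toNat + 1 : ℕ) : ℝ) = (M:ℝ) + 1 := by
          have h4 : ((M.toNat : ℕ) : ℝ) = (M : ℝ) := by
            rw [← Int.cast_natCast, Int.toNat_of_nonneg hM]
          push_cast
          rw [h4]
        rw [h3] at h2
        linarith

lemma sum_inv_sup_sq (M : ℤ) (hM : 0 ≤ M) :
    ∑ p ∈ (boxZ M).erase 0, (1:ℝ)/((supZ p:ℝ))^2
      ≤ 4 * (2 * (1 + Real.log ((M:ℝ) + 1)))^2 := by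
  classical
  have hpt : ∀ p ∈ (boxZ M).erase 0,
      (1:ℝ)/((supZ p:ℝ))^2 ≤ 4 * (finv p.1 * finv p.2) := by
    intro p hp
    rw [Finset.mem_erase] at hp
    have hp0 : p ≠ 0 := hp.1
    have hs1 : 1 ≤ supZ p := supZ_pos hp0
    have e1 : ((|p.1| : ℤ) : ℝ) ≤ ((supZ p : ℤ) : ℝ) := Int.cast_le.mpr (le_max_left _ _)
    have e2 : ((|p.2| : ℤ) : ℝ) ≤ ((supZ p : ℤ) : ℝ) := Int.cast_le.mpr (le_max_right _ _)
    have e3 : (1:ℝ) ≤ ((supZ p : ℤ) : ℝ) := by exact_mod_cast hs1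
    have a1 : (0:ℝ) ≤ ((|p.1| : ℤ) : ℝ) := by
      have : (0:ℤ) ≤ |p.1| := abs_nonneg _
      exact_mod_cast this
    have a2 : (0:ℝ) ≤ ((|p.2| : ℤ) : ℝ) := by
      have : (0:ℤ) ≤ |p.2| := abs_nonneg _
      exact_mod_cast this
    have hb : (((|p.1| : ℤ) : ℝ) + 1) * (((|p.2| : ℤ) : ℝ) + 1)
        ≤ 4 * ((supZ p : ℝ))^2 := by nlinarith
    unfold finv
    have c1 : ((|p.1| + 1 : ℤ) : ℝ) = ((|p.1| : ℤ) : ℝ) + 1 := by push_cast; ring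
    have c2 : ((|p.2| + 1 : ℤ) : ℝ) = ((|p.2| : ℤ) : ℝ) + 1 := by push_cast; ring
    rw [c1, c2]
    have hrw : (4:ℝ) * ((((|p.1| : ℤ) : ℝ) + 1)⁻¹ * (((|p.2| : ℤ) : ℝ) + 1)⁻¹)
        = 4 / ((((|p.1| : ℤ) : ℝ) + 1) * (((|p.2| : ℤ) : ℝ) + 1)) := by
      rw [div_eq_mul_inv, mul_inv]
    rw [hrw, div_le_div_iff₀ (by positivity) (by positivity)]
    nlinarith
  calc ∑ p ∈ (boxZ M).erase 0, (1:ℝ)/((supZ p:ℝ))^2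
      ≤ ∑ p ∈ (boxZ M).erase 0, 4 * (finv p.1 * finv p.2) := Finset.sum_le_sum hpt
    _ ≤ ∑ p ∈ boxZ M, 4 * (finv p.1 * finv p.2) := by
        apply Finset.sum_le_sum_of_subset_of_nonneg (Finset.erase_subset _ _)
        intro p _ _
        have := finv_nonneg p.1
        have := finv_nonneg p.2
        positivity
    _ = 4 * ((∑ x ∈ Finset.Icc (-M) M, finv x) * (∑ x ∈ Finset.Icc (-M) M, finv x)) := by
        rw [← Finset.mul_sum]
        congr 1
        rw [Finset.sum_mul_sum]
        rw [boxZ, Finset.sum_product]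
    _ ≤ 4 * (2 * (1 + Real.log ((M:ℝ) + 1)))^2 := by
        have h := sum_abs_inv M hM
        have hnn : (0:ℝ) ≤ ∑ x ∈ Finset.Icc (-M) M, finv x :=
          Finset.sum_nonneg (fun x _ => finv_nonneg x)
        nlinarith


lemma sum_inv_sup_prim (M : ℤ) (hM : 0 ≤ M) :
    ∑ n ∈ (boxZ M).erase 0, (1:ℝ)/((supZ (primZ n) : ℝ))
      ≤ (M:ℝ) * (4 * (2 * (1 + Real.log ((M:ℝ) + 1)))^2) := by
  classical
  have habs : ∀ n : ℤ × ℤ, n ≠ 0 → |(primZ n).1| ≤ |n.1| ∧ |(primZ n).2| ≤ |n.2| := by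
    intro n hn
    have hg := gInt_pos hn
    constructor
    · rw [← mul_primZ1 n, abs_mul, abs_of_nonneg hg.le]
      exact le_mul_of_one_le_left (abs_nonneg _) hg
    · rw [← mul_primZ2 n, abs_mul, abs_of_nonneg hg.le]
      exact le_mul_of_one_le_left (abs_nonneg _) hg
  have hmaps : ∀ n ∈ (boxZ M).erase 0, primZ n ∈ (boxZ M).erase 0 := by
    intro n hn
    rw [Finset.mem_erase] at hn ⊢
    refine ⟨primZ_ne_zero hn.1, ?_⟩
    rw [mem_boxZ] at hn ⊢
    obtain ⟨h1, h2⟩ := habs n hn.1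
    exact ⟨h1.trans hn.2.1, h2.trans hn.2.2⟩
  rw [← Finset.sum_fiberwise_of_maps_to hmaps (fun n => (1:ℝ)/((supZ (primZ n) : ℝ)))]
  have hinner : ∀ p ∈ (boxZ M).erase 0,
      ∑ n ∈ ((boxZ M).erase 0).filter (fun n => primZ n = p),
        (1:ℝ)/((supZ (primZ n) : ℝ)) ≤ (M:ℝ) * ((1:ℝ)/((supZ p : ℝ))^2) := by
    intro p hp
    have hp0 : p ≠ 0 := (Finset.mem_erase.1 hp).1
    have hsp : 1 ≤ supZ p := supZ_pos hp0
    have hspR : (0:ℝ) < (supZ p : ℝ) := by exact_mod_cast lt_of_lt_of_le zero_lt_one hsp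
    set K : ℤ := M / supZ p with hK
    have hK0 : 0 ≤ K := Int.ediv_nonneg hM (by linarith)
    have heq : ∀ n ∈ ((boxZ M).erase 0).filter (fun n => primZ n = p),
        (1:ℝ)/((supZ (primZ n) : ℝ)) = (1:ℝ)/((supZ p : ℝ)) := by
      intro n hn
      rw [(Finset.mem_filter.1 hn).2]
    rw [Finset.sum_congr rfl heq, Finset.sum_const]
    have hcard : (((boxZ M).erase 0).filter (fun n => primZ n = p)).card
        ≤ (Finset.Icc (1:ℤ) K).card := by
      apply Finset.card_le_card_of_injOn gInt
      · intro n hn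
        rw [Finset.mem_coe, Finset.mem_filter, Finset.mem_erase] at hn
        obtain ⟨⟨hn0, hnbox⟩, hnp⟩ := hn
        rw [Finset.mem_coe, Finset.mem_Icc]
        refine ⟨gInt_pos hn0, ?_⟩
        rw [hK, Int.le_ediv_iff_mul_le (by linarith : (0:ℤ) < supZ p)]
        have hmul : gInt n * supZ p = supZ n := by
          rw [← hnp]
          exact (supZ_mul n hn0).symm
        rw [hmul]
        rw [mem_boxZ] at hnbox
        exact max_le hnbox.1 hnbox.2
      · intro n hn n' hn' hgg
        simp only [Finset.mem_coe, Finset.mem_filter, Finset.mem_erase] at hn hn'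
        have e1 : n.1 = n'.1 := by
          rw [← mul_primZ1 n, ← mul_primZ1 n', hn.2, hn'.2, hgg]
        have e2 : n.2 = n'.2 := by
          rw [← mul_primZ2 n, ← mul_primZ2 n', hn.2, hn'.2, hgg]
        exact Prod.ext e1 e2
    have hcardIcc : (Finset.Icc (1:ℤ) K).card = K.toNat := by
      rw [Int.card_Icc]
      congr 1
      ring
    have hKle : (K:ℝ) ≤ (M:ℝ) / (supZ p : ℝ) := by
      rw [le_div_iff₀ hspR]
      have h2 : (K * supZ p : ℤ) ≤ M := Int.ediv_mul_le M (by linarith : supZ p ≠ 0)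
      exact_mod_cast h2
    rw [nsmul_eq_mul]
    have hcR : ((((boxZ M).erase 0).filter (fun n => primZ n = p)).card : ℝ) ≤ (K:ℝ) := by
      have h5 : ((((boxZ M).erase 0).filter (fun n => primZ n = p)).card : ℕ) ≤ K.toNat := by
        rw [← hcardIcc]; exact hcard
      calc ((((boxZ M).erase 0).filter (fun n => primZ n = p)).card : ℝ)
          ≤ (K.toNat : ℝ) := by exact_mod_cast h5
        _ = (K:ℝ) := by rw [← Int.cast_natCast, Int.toNat_of_nonneg hK0]
    calc ((((boxZ M).erase 0).filter (fun n => primZ n = p)).card : ℝ) * ((1:ℝ)/(supZ p : ℝ))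
        ≤ ((M:ℝ) / (supZ p : ℝ)) * ((1:ℝ)/(supZ p : ℝ)) := by
          apply mul_le_mul_of_nonneg_right (hcR.trans hKle) (by positivity)
      _ = (M:ℝ) * ((1:ℝ)/((supZ p : ℝ))^2) := by
          rw [div_mul_div_comm, mul_one, mul_one_div, sq]
  calc ∑ p ∈ (boxZ M).erase 0, ∑ n ∈ ((boxZ M).erase 0).filter (fun n => primZ n = p),
        (1:ℝ)/((supZ (primZ n) : ℝ))
      ≤ ∑ p ∈ (boxZ M).erase 0, (M:ℝ) * ((1:ℝ)/((supZ p : ℝ))^2) :=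
        Finset.sum_le_sum hinner
    _ = (M:ℝ) * ∑ p ∈ (boxZ M).erase 0, (1:ℝ)/((supZ p : ℝ))^2 := by
        rw [Finset.mul_sum]
    _ ≤ (M:ℝ) * (4 * (2 * (1 + Real.log ((M:ℝ) + 1)))^2) := by
        apply mul_le_mul_of_nonneg_left (sum_inv_sup_sq M hM)
        exact_mod_cast hM


lemma exp_quad {x : ℝ} (hx : 0 ≤ x) : x^2/4 ≤ Real.exp x := by
  have h1 : x/2 + 1 ≤ Real.exp (x/2) := Real.add_one_le_exp (x/2)
  have h2 : Real.exp x = Real.exp (x/2) * Real.exp (x/2) := by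
    rw [← Real.exp_add]
    congr 1
    ring
  nlinarith [Real.exp_pos (x/2)]

lemma log_two_le_one : Real.log 2 ≤ 1 := by
  have := Real.log_le_sub_one_of_pos (by norm_num : (0:ℝ) < 2)
  linarith

end TC

open TC

lemma key_identity (y A m₁ m₂ m₃ : ℤ × ℤ) (h : m₁ - m₂ + m₃ = A) :
    omega2 y m₁ - omega2 (y - m₁) m₂ + omega2 (y - m₁ + m₂) m₃
      = omega2 y A + omega2 (m₁ - A) (m₂ - A) := by
  have h3 : m₃ = A - m₁ + m₂ := by rw [← h]; ring
  subst h3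
  simp only [omega2, Prod.fst_sub, Prod.snd_sub, Prod.fst_add, Prod.snd_add]
  ring

lemma coord_bound {m : ℤ × ℤ} {j : ℕ} (hm : enorm2 m < 2 ^ (j + 1)) :
    |m.1| ≤ (2 ^ (j + 1) : ℤ) ∧ |m.2| ≤ (2 ^ (j + 1) : ℤ) := by
  have hpow : (0:ℝ) < 2 ^ (j + 1) := by positivity
  have hsq : ((m.1 : ℝ)) ^ 2 + ((m.2 : ℝ)) ^ 2 < ((2:ℝ) ^ (j + 1)) ^ 2 := by
    have h1 := (Real.sqrt_lt' hpow).1 hm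
    exact h1
  have hcast : (((2:ℤ) ^ (j + 1) : ℤ) : ℝ) = (2:ℝ) ^ (j + 1) := by push_cast; ring
  constructor
  · by_contra hcon
    push_neg at hcon
    have h2 : (2 ^ (j + 1) : ℤ) + 1 ≤ |m.1| := hcon
    have h3 : ((2:ℝ) ^ (j + 1) + 1) ≤ |(m.1 : ℝ)| := by
      rw [← Int.cast_abs, ← hcast]
      exact_mod_cast h2
    nlinarith [sq_nonneg ((m.2:ℝ)), sq_abs ((m.1:ℝ)), abs_nonneg ((m.1:ℝ))]
  · by_contra hcon
    push_neg at hcon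
    have h2 : (2 ^ (j + 1) : ℤ) + 1 ≤ |m.2| := hcon
    have h3 : ((2:ℝ) ^ (j + 1) + 1) ≤ |(m.2 : ℝ)| := by
      rw [← Int.cast_abs, ← hcast]
      exact_mod_cast h2
    nlinarith [sq_nonneg ((m.1:ℝ)), sq_abs ((m.2:ℝ)), abs_nonneg ((m.2:ℝ))]

set_option maxHeartbeats 1000000 in
/-- For every `η > 0` there is a constant `C` (independent of `y`, `A`, `c`, `j`) such
that for every `(A,c) ∈ ℤ² × ℤ`, every fixed `y ∈ ℤ²` and every `j ≥ 1`, the number of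
triples `(m₁,m₂,m₃)` with `2ʲ ≤ |mₗ| < 2^(j+1)` satisfying `m₁ − m₂ + m₃ = A` and
`ω(y,m₁) − ω(y−m₁,m₂) + ω(y−m₁+m₂,m₃) = c` is at most `C·2^((2+η)j)`. -/
theorem triple_count (η : ℝ) (hη : 0 < η) :
    ∃ C : ℝ, 0 < C ∧ ∀ (y A : ℤ × ℤ) (c : ℤ) (j : ℕ), 1 ≤ j →
      ((Set.ncard {m : (ℤ × ℤ) × (ℤ × ℤ) × (ℤ × ℤ) |
          ((2 : ℝ) ^ j ≤ enorm2 m.1 ∧ enorm2 m.1 < 2 ^ (j + 1)) ∧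
          ((2 : ℝ) ^ j ≤ enorm2 m.2.1 ∧ enorm2 m.2.1 < 2 ^ (j + 1)) ∧
          ((2 : ℝ) ^ j ≤ enorm2 m.2.2 ∧ enorm2 m.2.2 < 2 ^ (j + 1)) ∧
          m.1 - m.2.1 + m.2.2 = A ∧
          omega2 y m.1 - omega2 (y - m.1) m.2.1
            + omega2 (y - m.1 + m.2.1) m.2.2 = c} : ℝ))
        ≤ C * (2 : ℝ) ^ ((2 + η) * j) := by
  classical
  have hlog2 : 0 < Real.log 2 := Real.log_pos one_lt_two
  refine ⟨2^20 * (1 + (1/(η * Real.log 2))^2), by positivity, ?_⟩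
  intro y A c j hj
  set S : Set ((ℤ × ℤ) × (ℤ × ℤ) × (ℤ × ℤ)) := {m |
          ((2 : ℝ) ^ j ≤ enorm2 m.1 ∧ enorm2 m.1 < 2 ^ (j + 1)) ∧
          ((2 : ℝ) ^ j ≤ enorm2 m.2.1 ∧ enorm2 m.2.1 < 2 ^ (j + 1)) ∧
          ((2 : ℝ) ^ j ≤ enorm2 m.2.2 ∧ enorm2 m.2.2 < 2 ^ (j + 1)) ∧
          m.1 - m.2.1 + m.2.2 = A ∧
          omega2 y m.1 - omega2 (y - m.1) m.2.1
            + omega2 (y - m.1 + m.2.1) m.2.2 = c} with hSdef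
  -- RHS decomposition
  set P : ℝ := (2:ℝ)^j with hPdef
  set t : ℝ := (2:ℝ) ^ (η * (j:ℝ)) with htdef
  have hP0 : 0 < P := by positivity
  have hP2 : 2 ≤ P := by
    rw [hPdef]
    calc (2:ℝ) = 2^1 := (pow_one 2).symm
      _ ≤ 2^j := by
        apply pow_le_pow_right₀ one_le_two hj
  have ht0 : 0 < t := Real.rpow_pos_of_pos two_pos _
  have hrpow : (2:ℝ) ^ ((2 + η) * (j:ℝ)) = P^2 * t := by
    rw [show (2 + η) * (j:ℝ) = ((j * 2 : ℕ) : ℝ) + η * j by push_cast; ring,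
      Real.rpow_add two_pos, Real.rpow_natCast, pow_mul, htdef, hPdef]
  rw [hrpow]
  -- j^2 vs t
  have hjt : (η * Real.log 2)^2 * (j:ℝ)^2 ≤ 4 * t := by
    have hx : (0:ℝ) ≤ η * (j:ℝ) * Real.log 2 := by positivity
    have h1 := exp_quad hx
    have h2 : Real.exp (η * (j:ℝ) * Real.log 2) = t := by
      rw [htdef, Real.rpow_def_of_pos two_pos]
      congr 1
      ring
    rw [h2] at h1
    nlinarith
  rcases Set.eq_empty_or_nonempty S with hS | ⟨m₀, hm₀⟩
  · rw [hS]
    simp only [Set.ncard_empty, Nat.cast_zero]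
    positivity
  -- constants
  set N : ℤ := 2^(j+1) with hNdef
  set M : ℤ := 2^(j+3) with hMdef
  have hN0 : (0:ℤ) ≤ N := by positivity
  have hM0 : (0:ℤ) ≤ M := by positivity
  have hMN : M = 4 * N := by rw [hMdef, hNdef, show j+3 = (j+1)+2 from rfl, pow_add]; ring
  have hNR : ((N:ℤ):ℝ) = 2 * P := by rw [hNdef, hPdef]; push_cast [pow_succ]; ring
  have hMR : ((M:ℤ):ℝ) = 8 * P := by
    rw [hMdef, hPdef]
    push_cast [pow_succ]
    ring
  set d : ℤ := c - omega2 y A with hd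
  -- bound on A
  have hAb : |A.1| ≤ 3*N ∧ |A.2| ≤ 3*N := by
    obtain ⟨⟨_, h1⟩, ⟨_, h2⟩, ⟨_, h3⟩, h4, _⟩ := hm₀
    obtain ⟨b11, b12⟩ := coord_bound h1
    obtain ⟨b21, b22⟩ := coord_bound h2
    obtain ⟨b31, b32⟩ := coord_bound h3
    have e1 : m₀.1.1 - m₀.2.1.1 + m₀.2.2.1 = A.1 := congrArg Prod.fst h4
    have e2 : m₀.1.2 - m₀.2.1.2 + m₀.2.2.2 = A.2 := congrArg Prod.snd h4
    rw [abs_le] at b11 b12 b21 b22 b31 b32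
    constructor
    · rw [hNdef, abs_le]
      constructor <;> linarith [b11.1, b11.2, b21.1, b21.2, b31.1, b31.2]
    · rw [hNdef, abs_le]
      constructor <;> linarith [b12.1, b12.2, b22.1, b22.2, b32.1, b32.2]
  -- the pair Finset
  set Q : Finset ((ℤ × ℤ) × (ℤ × ℤ)) :=
    (boxZ N ×ˢ boxZ N).filter (fun q => omega2 (q.1 - A) (q.2 - A) = d) with hQdef
  -- S injects into Q
  have hSQ : (Set.ncard S : ℝ) ≤ (Q.card : ℝ) := by
    set T3 : Finset ((ℤ × ℤ) × (ℤ × ℤ) × (ℤ × ℤ)) :=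
      (boxZ N ×ˢ boxZ N ×ˢ boxZ N).filter (fun m =>
        m.1 - m.2.1 + m.2.2 = A ∧
        omega2 y m.1 - omega2 (y - m.1) m.2.1
          + omega2 (y - m.1 + m.2.1) m.2.2 = c) with hT3
    have hsub : S ⊆ ↑T3 := by
      intro m hm
      obtain ⟨⟨_, h1⟩, ⟨_, h2⟩, ⟨_, h3⟩, h4, h5⟩ := hm
      simp only [T3, Finset.coe_filter, Set.mem_setOf_eq, Finset.mem_product]
      refine ⟨⟨?_, ?_, ?_⟩, h4, h5⟩ <;> rw [mem_boxZ, hNdef]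
      · exact coord_bound h1
      · exact coord_bound h2
      · exact coord_bound h3
    have h6 : Set.ncard S ≤ T3.card := by
      calc Set.ncard S ≤ Set.ncard (↑T3 : Set _) :=
            Set.ncard_le_ncard hsub (Finset.finite_toSet T3)
        _ = T3.card := Set.ncard_coe_finset T3
    have h7 : T3.card ≤ Q.card := by
      apply Finset.card_le_card_of_injOn (fun m => (m.1, m.2.1))
      · intro m hm
        rw [hT3, Finset.mem_coe, Finset.mem_filter, Finset.mem_product, Finset.mem_product] at hm
        obtain ⟨⟨hb1, hb2, hb3⟩, h4, h5⟩ := hm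
        rw [hQdef, Finset.mem_coe, Finset.mem_filter, Finset.mem_product]
        refine ⟨⟨hb1, hb2⟩, ?_⟩
        have hkey := key_identity y A m.1 m.2.1 m.2.2 h4
        rw [hkey] at h5
        show omega2 (m.1 - A) (m.2.1 - A) = d
        rw [hd]
        omega
      · intro m hm m' hm' he
        simp only [Finset.mem_coe, hT3, Finset.mem_filter] at hm hm'
        simp only [Prod.mk.injEq] at he
        have e1 : m.1 = m'.1 := he.1
        have e2 : m.2.1 = m'.2.1 := he.2
        have e3 : m.2.2 = m'.2.2 := by
          have h4 := hm.2.1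
          have h4' := hm'.2.1
          have : m.2.2 = A - m.1 + m.2.1 := by rw [← h4]; ring
          have that : m'.2.2 = A - m'.1 + m'.2.1 := by rw [← h4']; ring
          rw [this, that, e1, e2]
        exact Prod.ext e1 (Prod.ext e2 e3)
    calc (Set.ncard S : ℝ) ≤ (T3.card : ℝ) := by exact_mod_cast h6
      _ ≤ (Q.card : ℝ) := by exact_mod_cast h7
  -- fiber decomposition of Q
  have hfib : Q.card = ∑ a ∈ boxZ N, (Q.filter (fun q => q.1 = a)).card := by
    apply Finset.card_eq_sum_card_fiberwise
    intro q hq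
    rw [hQdef, Finset.mem_coe, Finset.mem_filter, Finset.mem_product] at hq
    exact hq.1.1
  have hfib2 : ∀ a : ℤ × ℤ, (Q.filter (fun q => q.1 = a)).card
      ≤ ((boxZ N).filter (fun s => omega2 (a - A) (s - A) = d)).card := by
    intro a
    apply Finset.card_le_card_of_injOn Prod.snd
    · intro q hq
      rw [Finset.mem_coe, Finset.mem_filter] at hq
      obtain ⟨hq1, hq2⟩ := hq
      rw [hQdef, Finset.mem_filter, Finset.mem_product] at hq1
      rw [Finset.mem_coe, Finset.mem_filter]
      refine ⟨hq1.1.2, ?_⟩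
      rw [← hq2]
      exact hq1.2
    · intro q hq q' hq' he
      simp only [Finset.mem_coe, Finset.mem_filter] at hq hq'
      exact Prod.ext (hq.2.trans hq'.2.symm) he
  set B : ℝ := ((boxZ N).card : ℝ) with hBdef
  have hB0 : 0 ≤ B := by rw [hBdef]; positivity
  have hQaA : ∀ a : ℤ × ℤ, (((boxZ N).filter (fun s => omega2 (a - A) (s - A) = d)).card : ℝ) ≤ B := by
    intro a
    rw [hBdef]
    exact_mod_cast Finset.card_le_card (Finset.filter_subset _ _)
  have hQa : ∀ a ∈ (boxZ N).erase A,
      (((boxZ N).filter (fun s => omega2 (a - A) (s - A) = d)).card : ℝ)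
        ≤ 4*((N:ℤ):ℝ)/((supZ (primZ (a - A)) : ℤ):ℝ) + 1 := by
    intro a ha
    have hane : a - A ≠ 0 := sub_ne_zero.2 (Finset.mem_erase.1 ha).1
    have hsubf : (boxZ N).filter (fun s => omega2 (a - A) (s - A) = d)
        ⊆ (boxZ N).filter (fun s => (a-A).2 * s.1 - (a-A).1 * s.2
            = (d + 2*((a-A).2*A.1 - (a-A).1*A.2))/2) := by
      intro s hs
      rw [Finset.mem_filter] at hs ⊢
      refine ⟨hs.1, ?_⟩
      have hc := hs.2
      have h2 : 2 * (((a-A).2 * s.1 - (a-A).1 * s.2) - ((a-A).2*A.1 - (a-A).1*A.2)) = d := by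
        rw [← hc]
        simp only [omega2, Prod.fst_sub, Prod.snd_sub]
        ring
      set X := (a-A).2 * s.1 - (a-A).1 * s.2 with hX
      set Y := (a-A).2*A.1 - (a-A).1*A.2 with hY
      omega
    calc (((boxZ N).filter (fun s => omega2 (a - A) (s - A) = d)).card : ℝ)
        ≤ (((boxZ N).filter (fun s => (a-A).2 * s.1 - (a-A).1 * s.2
            = (d + 2*((a-A).2*A.1 - (a-A).1*A.2))/2)).card : ℝ) := by
          exact_mod_cast Finset.card_le_card hsubf
      _ ≤ 4*((N:ℤ):ℝ)/((supZ (primZ (a - A)) : ℤ):ℝ) + 1 :=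
          fiber_bound N hN0 (a - A) hane _
  -- sum bound
  have hsup_nonneg : ∀ n : ℤ × ℤ, (0:ℝ) ≤ (1:ℝ)/((supZ (primZ n) : ℤ):ℝ) := by
    intro n
    apply div_nonneg zero_le_one
    have : (0:ℤ) ≤ supZ (primZ n) := le_max_of_le_left (abs_nonneg _)
    exact_mod_cast this
  have hW : ∑ a ∈ (boxZ N).erase A, (1:ℝ)/((supZ (primZ (a - A)) : ℤ):ℝ)
      ≤ ((M:ℤ):ℝ) * (4 * (2 * (1 + Real.log (((M:ℤ):ℝ) + 1)))^2) := by
    have himg : ∑ a ∈ (boxZ N).erase A, (1:ℝ)/((supZ (primZ (a - A)) : ℤ):ℝ)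
        = ∑ n ∈ ((boxZ N).erase A).image (fun a => a - A), (1:ℝ)/((supZ (primZ n) : ℤ):ℝ) := by
      rw [Finset.sum_image]
      intro x _ y _ hxy
      have := sub_left_injective hxy
      exact this
    rw [himg]
    calc ∑ n ∈ ((boxZ N).erase A).image (fun a => a - A), (1:ℝ)/((supZ (primZ n) : ℤ):ℝ)
        ≤ ∑ n ∈ (boxZ M).erase 0, (1:ℝ)/((supZ (primZ n) : ℤ):ℝ) := by
          apply Finset.sum_le_sum_of_subset_of_nonneg
          · intro n hn
            rw [Finset.mem_image] at hn
            obtain ⟨a, ha, rfl⟩ := hn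
            rw [Finset.mem_erase] at ha
            rw [Finset.mem_erase]
            refine ⟨sub_ne_zero.2 ha.1, ?_⟩
            rw [mem_boxZ]
            have hb := mem_boxZ.1 ha.2
            have t1 : |a.1 - A.1| ≤ |a.1| + |A.1| := abs_sub _ _
            have t2 : |a.2 - A.2| ≤ |a.2| + |A.2| := abs_sub _ _
            constructor
            · simp only [Prod.fst_sub]
              rw [hMN]
              have := hAb.1
              linarith [hb.1]
            · simp only [Prod.snd_sub]
              rw [hMN]
              have := hAb.2
              linarith [hb.2]
          · intro n _ _
            exact hsup_nonneg n
      _ ≤ ((M:ℤ):ℝ) * (4 * (2 * (1 + Real.log (((M:ℤ):ℝ) + 1)))^2) := by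
          have h := sum_inv_sup_prim M hM0
          calc ∑ n ∈ (boxZ M).erase 0, (1:ℝ)/((supZ (primZ n) : ℤ):ℝ)
              = ∑ n ∈ (boxZ M).erase 0, (1:ℝ)/((supZ (primZ n) : ℝ)) := rfl
            _ ≤ _ := h
  -- assemble card Q bound
  have hQbound : (Q.card : ℝ) ≤ 2 * B
      + 4*((N:ℤ):ℝ) * (((M:ℤ):ℝ) * (4 * (2 * (1 + Real.log (((M:ℤ):ℝ) + 1)))^2)) := by
    have hc1 : (Q.card : ℝ) = ∑ a ∈ boxZ N, ((Q.filter (fun q => q.1 = a)).card : ℝ) := by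
      rw [hfib]
      push_cast
      rfl
    have hc2 : ∑ a ∈ boxZ N, ((Q.filter (fun q => q.1 = a)).card : ℝ)
        ≤ ∑ a ∈ boxZ N, (((boxZ N).filter (fun s => omega2 (a - A) (s - A) = d)).card : ℝ) := by
      apply Finset.sum_le_sum
      intro a _
      exact_mod_cast hfib2 a
    have hc3 : ∑ a ∈ boxZ N, (((boxZ N).filter (fun s => omega2 (a - A) (s - A) = d)).card : ℝ)
        ≤ B + ∑ a ∈ (boxZ N).erase A,
            (((boxZ N).filter (fun s => omega2 (a - A) (s - A) = d)).card : ℝ) := by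
      by_cases hmem : A ∈ boxZ N
      · rw [← Finset.add_sum_erase _ _ hmem]
        linarith [hQaA A]
      · rw [Finset.erase_eq_of_notMem hmem]
        linarith
    have hc4 : ∑ a ∈ (boxZ N).erase A,
          (((boxZ N).filter (fun s => omega2 (a - A) (s - A) = d)).card : ℝ)
        ≤ ∑ a ∈ (boxZ N).erase A,
            (4*((N:ℤ):ℝ)/((supZ (primZ (a - A)) : ℤ):ℝ) + 1) :=
      Finset.sum_le_sum hQa
    have hc5 : ∑ a ∈ (boxZ N).erase A,
          (4*((N:ℤ):ℝ)/((supZ (primZ (a - A)) : ℤ):ℝ) + 1)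
        = 4*((N:ℤ):ℝ) * (∑ a ∈ (boxZ N).erase A, (1:ℝ)/((supZ (primZ (a - A)) : ℤ):ℝ))
          + (((boxZ N).erase A).card : ℝ) := by
      rw [Finset.sum_add_distrib, Finset.sum_const, nsmul_eq_mul, mul_one, Finset.mul_sum]
      congr 1
      apply Finset.sum_congr rfl
      intro a _
      rw [mul_one_div]
    have hc6 : (((boxZ N).erase A).card : ℝ) ≤ B := by
      rw [hBdef]
      exact_mod_cast Finset.card_le_card (Finset.erase_subset _ _)
    have hN0R : (0:ℝ) ≤ 4*((N:ℤ):ℝ) := by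
      have : (0:ℝ) ≤ ((N:ℤ):ℝ) := by exact_mod_cast hN0
      linarith
    have hc7 : 4*((N:ℤ):ℝ) * (∑ a ∈ (boxZ N).erase A, (1:ℝ)/((supZ (primZ (a - A)) : ℤ):ℝ))
        ≤ 4*((N:ℤ):ℝ) * (((M:ℤ):ℝ) * (4 * (2 * (1 + Real.log (((M:ℤ):ℝ) + 1)))^2)) :=
      mul_le_mul_of_nonneg_left hW hN0R
    calc (Q.card : ℝ) = ∑ a ∈ boxZ N, ((Q.filter (fun q => q.1 = a)).card : ℝ) := hc1
      _ ≤ ∑ a ∈ boxZ N, (((boxZ N).filter (fun s => omega2 (a - A) (s - A) = d)).card : ℝ) := hc2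
      _ ≤ B + ∑ a ∈ (boxZ N).erase A,
            (((boxZ N).filter (fun s => omega2 (a - A) (s - A) = d)).card : ℝ) := hc3
      _ ≤ B + ∑ a ∈ (boxZ N).erase A,
            (4*((N:ℤ):ℝ)/((supZ (primZ (a - A)) : ℤ):ℝ) + 1) := by linarith [hc4]
      _ = B + (4*((N:ℤ):ℝ) * (∑ a ∈ (boxZ N).erase A, (1:ℝ)/((supZ (primZ (a - A)) : ℤ):ℝ))
            + (((boxZ N).erase A).card : ℝ)) := by rw [hc5]
      _ ≤ 2 * B + 4*((N:ℤ):ℝ) * (((M:ℤ):ℝ) * (4 * (2 * (1 + Real.log (((M:ℤ):ℝ) + 1)))^2)) := by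
          linarith
  -- numeric bounds
  have hj1 : (1:ℝ) ≤ (j:ℝ) := by exact_mod_cast hj
  have hBbound : B ≤ 25 * P^2 := by
    have h2N : N + 1 - (-N) = 2*N + 1 := by ring
    have hcard : (boxZ N).card = (2*N + 1).toNat * (2*N + 1).toNat := by
      rw [boxZ, Finset.card_product, Int.card_Icc, h2N]
    have hcast : (((2*N + 1).toNat : ℕ) : ℝ) = 2*((N:ℤ):ℝ) + 1 := by
      rw [← Int.cast_natCast, Int.toNat_of_nonneg (by linarith : (0:ℤ) ≤ 2*N+1)]
      push_cast
      ring
    have hBval : B = (2*((N:ℤ):ℝ) + 1) * (2*((N:ℤ):ℝ) + 1) := by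
      rw [hBdef, hcard, Nat.cast_mul, hcast]
    rw [hBval, hNR]
    nlinarith
  have hlogM : Real.log (((M:ℤ):ℝ) + 1) ≤ (j:ℝ) + 4 := by
    have hle : ((M:ℤ):ℝ) + 1 ≤ (2:ℝ)^(j+4) := by
      rw [hMR, pow_add]
      have : (2:ℝ)^j = P := rfl
      nlinarith
    have h1 : Real.log (((M:ℤ):ℝ) + 1) ≤ Real.log ((2:ℝ)^(j+4)) := by
      apply Real.log_le_log (by nlinarith [hMR, hP0]) hle
    have h2 : Real.log ((2:ℝ)^(j+4)) = ((j+4 : ℕ):ℝ) * Real.log 2 := by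
      rw [Real.log_pow]
    rw [h2] at h1
    have h3 : ((j+4 : ℕ):ℝ) * Real.log 2 ≤ ((j+4 : ℕ):ℝ) * 1 := by
      apply mul_le_mul_of_nonneg_left log_two_le_one (by positivity)
    have h4 : ((j+4 : ℕ):ℝ) = (j:ℝ) + 4 := by push_cast; ring
    rw [h4] at h1 h3
    linarith
  have hlog0 : 0 ≤ Real.log (((M:ℤ):ℝ) + 1) := by
    apply Real.log_nonneg
    nlinarith [hMR, hP0]
  have hbr : (2 * (1 + Real.log (((M:ℤ):ℝ) + 1)))^2 ≤ 144 * (j:ℝ)^2 := by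
    have h1 : 0 ≤ 2 * (1 + Real.log (((M:ℤ):ℝ) + 1)) := by linarith
    have h2 : 2 * (1 + Real.log (((M:ℤ):ℝ) + 1)) ≤ 2 * ((j:ℝ) + 5) := by linarith
    have h3 : (2 * (1 + Real.log (((M:ℤ):ℝ) + 1)))^2 ≤ (2 * ((j:ℝ) + 5))^2 := by
      apply pow_le_pow_left₀ h1 h2
    nlinarith
  have hfin1 : (Set.ncard S : ℝ) ≤ 50*P^2 + 36864 * P^2 * (j:ℝ)^2 := by
    have heq1 : 4*((N:ℤ):ℝ) * (((M:ℤ):ℝ) * (4 * (2 * (1 + Real.log (((M:ℤ):ℝ) + 1)))^2))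
        = 256 * P^2 * (2 * (1 + Real.log (((M:ℤ):ℝ) + 1)))^2 := by
      rw [hNR, hMR]
      ring
    have heq2 : 256 * P^2 * (2 * (1 + Real.log (((M:ℤ):ℝ) + 1)))^2
        ≤ 256 * P^2 * (144 * (j:ℝ)^2) :=
      mul_le_mul_of_nonneg_left hbr (by positivity)
    calc (Set.ncard S : ℝ) ≤ (Q.card : ℝ) := hSQ
      _ ≤ 2 * B + 4*((N:ℤ):ℝ) * (((M:ℤ):ℝ)
            * (4 * (2 * (1 + Real.log (((M:ℤ):ℝ) + 1)))^2)) := hQbound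
      _ ≤ 2 * (25 * P^2) + 256 * P^2 * (144 * (j:ℝ)^2) := by
          rw [heq1] at hQbound ⊢
          linarith
      _ = 50*P^2 + 36864 * P^2 * (j:ℝ)^2 := by ring
  have hfin2 : 50*P^2 + 36864 * P^2 * (j:ℝ)^2 ≤ 36914 * P^2 * (j:ℝ)^2 := by
    nlinarith [sq_nonneg P, sq_nonneg ((j:ℝ) - 1), hP0]
  have hx2 : (0:ℝ) < (η * Real.log 2)^2 := by positivity
  have hfin3 : 36914 * P^2 * (j:ℝ)^2 ≤ 36914 * P^2 * (4 * t / (η * Real.log 2)^2) := by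
    apply mul_le_mul_of_nonneg_left _ (by positivity)
    rw [le_div_iff₀ hx2]
    nlinarith [hjt]
  have hfin4 : 36914 * P^2 * (4 * t / (η * Real.log 2)^2)
      ≤ 2^20 * (1 + (1/(η * Real.log 2))^2) * (P^2 * t) := by
    have hinv : (0:ℝ) ≤ ((η * Real.log 2)^2)⁻¹ := by positivity
    have hPt : (0:ℝ) < P^2 * t := by positivity
    have hrw1 : (1/(η * Real.log 2))^2 = ((η * Real.log 2)^2)⁻¹ := by
      rw [one_div, inv_pow]
    rw [hrw1, div_eq_mul_inv]
    nlinarith [mul_nonneg hPt.le hinv, hPt]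
  calc (Set.ncard S : ℝ) ≤ 50*P^2 + 36864 * P^2 * (j:ℝ)^2 := hfin1
    _ ≤ 36914 * P^2 * (j:ℝ)^2 := hfin2
    _ ≤ 36914 * P^2 * (4 * t / (η * Real.log 2)^2) := hfin3
    _ ≤ 2^20 * (1 + (1/(η * Real.log 2))^2) * (P^2 * t) := hfin4
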